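/- Let A, B be real symmetric M×M matrices with A positive semidefinite, let D ∈ K, and let P ∈ Gr(m,ℝ^M) be a minimizer of Q ↦ Tr(G(D)Q) over Gr(m,ℝ^M). Then for every α ∈ [0,1], J((1−α)D + αP) ≥ J(P); in other words, the optimal damping step of the ODA applied to the quadratic functional J equals the full step α = 1, so the ODA initialized on Gr(m,ℝ^M) coincides with the Roothaan algorithm. -/

import Mathlib

open Matrix Filter Topology

noncomputable section

/-- The Grassmann manifold `Gr(m, ℝ^M)`. -/
def Gr (M m : ℕ) (P : Matrix (Fin M) (Fin M) ℝ) : Prop :=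
  P.IsSymm ∧ P * P = P ∧ P.trace = (m : ℝ)

/-- `K = CH(Gr(m,ℝ^M))`: symmetric `D` with `0 ⪯ D ⪯ I` and `Tr D = m`. -/
def Kset (M m : ℕ) (D : Matrix (Fin M) (Fin M) ℝ) : Prop :=
  D.PosSemidef ∧ (1 - D).PosSemidef ∧ D.trace = (m : ℝ)

/-- The cost function `J(P) = Tr(BP) - (1/2) Tr(APAP)`. -/
def Jfun {M : ℕ} (A B P : Matrix (Fin M) (Fin M) ℝ) : ℝ :=
  (B * P).trace - (1 / 2) * (A * P * A * P).trace

/-- The gradient `G(P) = B - APA`. -/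
def Gmap {M : ℕ} (A B P : Matrix (Fin M) (Fin M) ℝ) : Matrix (Fin M) (Fin M) ℝ :=
  B - A * P * A

/-- Auxiliary: selecting `m` indices with small `lam`-values beats any fractional weights. -/
lemma aux_comb_lemma {M m : ℕ} (hm1 : 1 ≤ m) (hmM : m ≤ M) (lam w : Fin M → ℝ)
    (hw0 : ∀ i, 0 ≤ w i) (hw1 : ∀ i, w i ≤ 1) (hsum : ∑ i, w i = (m : ℝ)) :
    ∃ S : Finset (Fin M), S.card = m ∧ ∑ i ∈ S, lam i ≤ ∑ i, lam i * w i := by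
  have hne : (Finset.univ.powersetCard m : Finset (Finset (Fin M))).Nonempty := by
    apply Finset.powersetCard_nonempty_of_le
    simpa using hmM
  obtain ⟨S, hSmem, hSmin⟩ := Finset.exists_min_image _ (fun T => ∑ i ∈ T, lam i) hne
  have hScard : S.card = m := (Finset.mem_powersetCard.1 hSmem).2
  refine ⟨S, hScard, ?_⟩
  have hexch : ∀ i ∉ S, ∀ j ∈ S, lam j ≤ lam i := by
    intro i hi j hj
    have hmem : insert i (S.erase j) ∈ Finset.univ.powersetCard m := by
      rw [Finset.mem_powersetCard]
      refine ⟨Finset.subset_univ _, ?_⟩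
      rw [Finset.card_insert_of_notMem (by simp [hi]), Finset.card_erase_of_mem hj, hScard]
      omega
    have h2 := hSmin _ hmem
    rw [Finset.sum_insert (by simp [hi]), Finset.sum_erase_eq_sub hj] at h2
    linarith
  have hSne : S.Nonempty := by
    rw [← Finset.card_pos, hScard]; omega
  obtain ⟨j0, hj0, hj0max⟩ := Finset.exists_max_image S lam hSne
  set c := lam j0 with hc
  have h1 : ∀ i ∈ Sᶜ, c * w i ≤ lam i * w i := fun i hi =>
    mul_le_mul_of_nonneg_right (hexch i (by simpa using hi) j0 hj0) (hw0 i)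
  have h2 : ∀ i ∈ S, lam i * (1 - w i) ≤ c * (1 - w i) := fun i hi =>
    mul_le_mul_of_nonneg_right (hj0max i hi) (by linarith [hw1 i])
  have hsplit : ∑ i, lam i * w i = ∑ i ∈ S, lam i * w i + ∑ i ∈ Sᶜ, lam i * w i := by
    rw [Finset.sum_add_sum_compl]
  have hwsplit : ∑ i ∈ S, w i + ∑ i ∈ Sᶜ, w i = (m : ℝ) := by
    rw [Finset.sum_add_sum_compl, hsum]
  have hScardR : ((S.card : ℝ)) = (m : ℝ) := by exact_mod_cast congrArg Nat.cast hScard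
  have key1 : c * ∑ i ∈ Sᶜ, w i ≤ ∑ i ∈ Sᶜ, lam i * w i := by
    rw [Finset.mul_sum]; exact Finset.sum_le_sum h1
  have key2 : ∑ i ∈ S, lam i * (1 - w i) ≤ c * ∑ i ∈ S, (1 - w i) := by
    rw [Finset.mul_sum]; exact Finset.sum_le_sum h2
  have hbal : ∑ i ∈ S, (1 - w i) = ∑ i ∈ Sᶜ, w i := by
    rw [Finset.sum_sub_distrib, Finset.sum_const, nsmul_eq_mul, hScardR]
    linarith
  have exp1 : ∑ i ∈ S, lam i * (1 - w i) = ∑ i ∈ S, lam i - ∑ i ∈ S, lam i * w i := by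
    rw [← Finset.sum_sub_distrib]; congr 1; ext i; ring
  rw [hbal] at key2
  linarith

/-- Diagonal entries of a real positive semidefinite matrix are nonnegative. -/
lemma aux_psd_diag {M : ℕ} {A : Matrix (Fin M) (Fin M) ℝ} (h : A.PosSemidef) (i : Fin M) :
    0 ≤ A i i := by
  exact h.diag_nonneg

/-- Any element of `K` is dominated, for the linear form `Tr(G ·)`, by some element of `Gr`. -/
lemma aux_key_lemma {M m : ℕ} (hm1 : 1 ≤ m) (hmM : m ≤ M)
    (G : Matrix (Fin M) (Fin M) ℝ) (hG : G.IsHermitian)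
    (D : Matrix (Fin M) (Fin M) ℝ) (hD : Kset M m D) :
    ∃ Q : Matrix (Fin M) (Fin M) ℝ, Gr M m Q ∧ (G * Q).trace ≤ (G * D).trace := by
  classical
  set V : Matrix (Fin M) (Fin M) ℝ := (hG.eigenvectorUnitary : Matrix (Fin M) (Fin M) ℝ) with hV
  set lam : Fin M → ℝ := hG.eigenvalues with hlam
  have hVmem : V ∈ Matrix.unitaryGroup (Fin M) ℝ := hG.eigenvectorUnitary.2
  have hVV : Vᴴ * V = 1 := Matrix.mem_unitaryGroup_iff'.mp hVmem
  have hVV' : V * Vᴴ = 1 := Matrix.mem_unitaryGroup_iff.mp hVmem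
  have hcanA : ∀ X : Matrix (Fin M) (Fin M) ℝ, X * Vᴴ * V = X := fun X => by
    rw [Matrix.mul_assoc, hVV, Matrix.mul_one]
  have hcanB : ∀ X : Matrix (Fin M) (Fin M) ℝ, X * V * Vᴴ = X := fun X => by
    rw [Matrix.mul_assoc, hVV', Matrix.mul_one]
  have trconj : ∀ X : Matrix (Fin M) (Fin M) ℝ, (V * X * Vᴴ).trace = X.trace := fun X => by
    rw [Matrix.trace_mul_cycle, hVV, Matrix.one_mul]
  have hspec : G = V * diagonal lam * Vᴴ := by
    have := hG.spectral_theorem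
    simpa [Matrix.star_eq_conjTranspose] using this
  set D' : Matrix (Fin M) (Fin M) ℝ := Vᴴ * D * V with hD'
  set w : Fin M → ℝ := fun i => D' i i with hw
  have hD'psd : D'.PosSemidef := hD.1.conjTranspose_mul_mul_same V
  have hw0 : ∀ i, 0 ≤ w i := fun i => aux_psd_diag hD'psd i
  have h1D' : (1 : Matrix (Fin M) (Fin M) ℝ) - D' = Vᴴ * (1 - D) * V := by
    rw [Matrix.mul_sub, Matrix.sub_mul, Matrix.mul_one, hVV]
  have hw1 : ∀ i, w i ≤ 1 := by
    intro i
    have := aux_psd_diag ((hD.2.1).conjTranspose_mul_mul_same V) i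
    rw [← h1D'] at this
    have h2 : ((1 : Matrix (Fin M) (Fin M) ℝ) - D') i i = 1 - w i := by
      simp [Matrix.sub_apply, Matrix.one_apply, hw]
    rw [h2] at this; linarith
  have hDD' : D = V * D' * Vᴴ := by
    rw [hD']; simp only [← Matrix.mul_assoc]
    rw [Matrix.mul_assoc V Vᴴ D, ← Matrix.mul_assoc, hVV', Matrix.one_mul, hcanB]
  have hsum : ∑ i, w i = (m : ℝ) := by
    have : D'.trace = (m : ℝ) := by
      have := hD.2.2; rw [hDD', trconj] at this; exact this
    exact this
  have hGD : G * D = V * (diagonal lam * D') * Vᴴ := by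
    rw [hspec, hDD']
    simp only [← Matrix.mul_assoc]
    rw [hcanA (V * diagonal lam)]
  have hdiagtr : ∀ u : Fin M → ℝ, (diagonal u * D').trace = ∑ i, u i * w i := by
    intro u
    simp [Matrix.trace, Matrix.diagonal_mul, Matrix.diag, hw]
  have htrGD : (G * D).trace = ∑ i, lam i * w i := by
    rw [hGD, trconj, hdiagtr]
  obtain ⟨S, hScard, hSle⟩ := aux_comb_lemma hm1 hmM lam w hw0 hw1 hsum
  set chi : Fin M → ℝ := fun i => if i ∈ S then 1 else 0 with hchi
  set Q : Matrix (Fin M) (Fin M) ℝ := V * diagonal chi * Vᴴ with hQ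
  have hQH : Qᴴ = Q := by
    rw [hQ]
    simp [Matrix.conjTranspose_mul, Matrix.diagonal_conjTranspose, Matrix.mul_assoc]
  refine ⟨Q, ⟨?_, ?_, ?_⟩, ?_⟩
  · rw [Matrix.IsSymm, ← conjTranspose_eq_transpose_of_trivial]; exact hQH
  · have hchi2 : diagonal chi * diagonal chi = diagonal chi := by
      rw [Matrix.diagonal_mul_diagonal]
      have h : (fun i => chi i * chi i) = chi := by
        funext i; simp only [hchi]; split <;> norm_num
      rw [h]
    rw [hQ]; simp only [← Matrix.mul_assoc]
    rw [hcanA (V * diagonal chi), Matrix.mul_assoc V (diagonal chi) (diagonal chi), hchi2]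
  · rw [hQ, trconj, Matrix.trace_diagonal]
    simp [hchi, hScard]
  · have hGQ : G * Q = V * (diagonal lam * diagonal chi) * Vᴴ := by
      rw [hspec, hQ]; simp only [← Matrix.mul_assoc]
      rw [hcanA (V * diagonal lam)]
    rw [hGQ, trconj, Matrix.diagonal_mul_diagonal, Matrix.trace_diagonal, htrGD]
    have heq : ∑ i, lam i * chi i = ∑ i ∈ S, lam i := by
      simp only [hchi, mul_ite, mul_one, mul_zero]
      simp
    calc ∑ i, lam i * chi i = ∑ i ∈ S, lam i := heq
      _ ≤ ∑ i, lam i * w i := hSle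

/-- Symmetry of the quadratic form `Tr(AXAY)`. -/
lemma aux_trace_swap {M : ℕ} (A X Y : Matrix (Fin M) (Fin M) ℝ)
    (hA : A.IsSymm) (hX : X.IsSymm) (hY : Y.IsSymm) :
    (A * X * A * Y).trace = (A * Y * A * X).trace := by
  have h1 : (A * X * A * Y)ᵀ = Y * A * X * A := by
    simp [Matrix.transpose_mul, hA.eq, hX.eq, hY.eq, Matrix.mul_assoc]
  calc (A * X * A * Y).trace = ((A * X * A * Y)ᵀ).trace := (Matrix.trace_transpose _).symm
    _ = ((Y * A * X) * A).trace := by rw [h1]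
    _ = (A * (Y * A * X)).trace := Matrix.trace_mul_comm _ _
    _ = (A * Y * A * X).trace := by rw [← Matrix.mul_assoc, ← Matrix.mul_assoc]

open scoped MatrixOrder in
/-- Nonnegativity of the quadratic form `Tr(AdAd)` for `A ⪰ 0` and `d` symmetric. -/
lemma aux_trace_quad_nonneg {M : ℕ} (A d : Matrix (Fin M) (Fin M) ℝ)
    (hApsd : A.PosSemidef) (hd : d.IsSymm) : 0 ≤ (A * d * A * d).trace := by
  obtain ⟨s, hsH, hss⟩ : ∃ s : Matrix (Fin M) (Fin M) ℝ, sᴴ = s ∧ s * s = A :=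
    ⟨CFC.sqrt A, (CFC.sqrt_nonneg A).isSelfAdjoint, CFC.sqrt_mul_sqrt_self A hApsd.nonneg⟩
  have hTH : (s * d * s)ᴴ = s * d * s := by
    have hsT : sᵀ = s := by rw [← conjTranspose_eq_transpose_of_trivial]; exact hsH
    simp [Matrix.conjTranspose_mul, hsT, hd.eq, Matrix.mul_assoc]
  have h1 : (A * d * A * d).trace = ((s * d * s)ᴴ * (s * d * s)).trace := by
    rw [hTH, ← hss]
    rw [show s * s * d * (s * s) * d = s * (s * d * (s * s) * d) by
      simp only [Matrix.mul_assoc]]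
    rw [Matrix.trace_mul_comm]
    congr 1
    simp only [Matrix.mul_assoc]
  rw [h1, Matrix.trace]
  exact Finset.sum_nonneg fun i _ =>
    aux_psd_diag (Matrix.posSemidef_conjTranspose_mul_self (s * d * s)) i

/-- if `D ∈ K` and `P ∈ Gr(m,ℝ^M)` minimizes `Q ↦ Tr(G(D)Q)` over
`Gr(m,ℝ^M)`, then `J((1−α)D + αP) ≥ J(P)` for every `α ∈ [0,1]`: the optimal damping
step of the ODA equals the full step `α = 1`. -/
theorem stmt_16 {M m : ℕ} (hM : 2 ≤ M) (hm1 : 1 ≤ m) (hm2 : m ≤ M - 1)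
    (A B : Matrix (Fin M) (Fin M) ℝ) (hA : A.IsSymm) (hApsd : A.PosSemidef)
    (hB : B.IsSymm) (D : Matrix (Fin M) (Fin M) ℝ) (hD : Kset M m D)
    (P : Matrix (Fin M) (Fin M) ℝ) (hP : Gr M m P)
    (hPmin : ∀ Q : Matrix (Fin M) (Fin M) ℝ, Gr M m Q →
      (Gmap A B D * P).trace ≤ (Gmap A B D * Q).trace) :
    ∀ α : ℝ, α ∈ Set.Icc (0 : ℝ) 1 →
      Jfun A B P ≤ Jfun A B ((1 - α) • D + α • P) := by
  intro α hα
  obtain ⟨hα0, hα1⟩ := hα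
  have hDsym : D.IsSymm := by
    have := hD.1.isHermitian
    rwa [Matrix.IsHermitian, conjTranspose_eq_transpose_of_trivial] at this
  have hPsym : P.IsSymm := hP.1
  -- the gradient is symmetric
  have hGsym : (Gmap A B D).IsSymm := by
    unfold Gmap
    rw [Matrix.IsSymm, Matrix.transpose_sub, hB.eq]
    congr 1
    simp [Matrix.transpose_mul, hA.eq, hDsym.eq, Matrix.mul_assoc]
  have hGherm : (Gmap A B D).IsHermitian := by
    rw [Matrix.IsHermitian, conjTranspose_eq_transpose_of_trivial]; exact hGsym
  -- D is dominated by some Q ∈ Gr for the linear form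
  obtain ⟨Q, hQGr, hQle⟩ :=
    aux_key_lemma hm1 (le_trans hm2 (Nat.sub_le M 1)) (Gmap A B D) hGherm D hD
  have hle : (Gmap A B D * P).trace ≤ (Gmap A B D * D).trace := (hPmin Q hQGr).trans hQle
  -- express in scalar form
  have e1 : ∀ X : Matrix (Fin M) (Fin M) ℝ,
      (Gmap A B D * X).trace = (B * X).trace - (A * D * A * X).trace := by
    intro X
    rw [Gmap, Matrix.sub_mul, Matrix.trace_sub]
  rw [e1 P, e1 D] at hle
  have hswap : (A * P * A * D).trace = (A * D * A * P).trace :=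
    aux_trace_swap A P D hA hPsym hDsym
  -- quadratic form nonnegativity
  have hPD : (P - D).IsSymm := by
    rw [Matrix.IsSymm, Matrix.transpose_sub, hPsym.eq, hDsym.eq]
  have hqn := aux_trace_quad_nonneg A (P - D) hApsd hPD
  have hexpand : A * (P - D) * A * (P - D)
      = A * P * A * P - A * P * A * D - (A * D * A * P - A * D * A * D) := by
    simp only [Matrix.mul_sub, Matrix.sub_mul]
    abel
  rw [hexpand, Matrix.trace_sub, Matrix.trace_sub, Matrix.trace_sub, hswap] at hqn
  -- expand the damped functional
  set t1 := (B * D).trace with ht1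
  set t2 := (B * P).trace with ht2
  set q11 := (A * D * A * D).trace with hq11
  set q12 := (A * D * A * P).trace with hq12
  set q22 := (A * P * A * P).trace with hq22
  have hJP : Jfun A B P = t2 - (1 / 2) * q22 := rfl
  have hJX : Jfun A B ((1 - α) • D + α • P)
      = ((1 - α) * t1 + α * t2)
        - (1 / 2) * ((1 - α) * ((1 - α) * q11) + (1 - α) * (α * q12)
          + (α * ((1 - α) * q12) + α * (α * q22))) := by
    rw [Jfun]
    simp only [Matrix.mul_add, Matrix.add_mul, Matrix.mul_smul, Matrix.smul_mul,
      Matrix.trace_add, Matrix.trace_smul, smul_eq_mul, smul_smul]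
    rw [hswap]
    ring
  rw [hJP, hJX]
  nlinarith [mul_nonneg (by linarith : (0:ℝ) ≤ 1 - α) (by linarith : (0:ℝ) ≤ (t1 - q11) - (t2 - q12)),
    mul_nonneg (mul_nonneg (by linarith : (0:ℝ) ≤ 1 - α) (by linarith : (0:ℝ) ≤ 1 + α))
      (by linarith : (0:ℝ) ≤ q22 - 2 * q12 + q11)]
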